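/- Let q be a prime power and n ≥ 1. There exist affine subspaces A_1, …, A_m and B_1, …, B_m of F_q^n with m = (q^n − 1)/(q − 1) such that the pair of families {(A_i, B_i) : 1 ≤ i ≤ m} is cross-intersecting, i.e., A_i ∩ B_i = ∅ for each 1 ≤ i ≤ m and A_i ∩ B_j ≠ ∅ whenever 1 ≤ i < j ≤ m. -/

import Mathlib

open Pointwise

open scoped LinearAlgebra.Projectivization

section Aux

variable {F : Type*} [Field F] {n : ℕ}

/-- The linear functional `x ↦ ∑ k, v k * x k`. -/
noncomputable def dotF (v : Fin n → F) : (Fin n → F) →ₗ[F] F :=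
  ∑ k, v k • LinearMap.proj k

lemma dotF_apply (v x : Fin n → F) : dotF v x = ∑ k, v k * x k := by
  simp [dotF]

lemma single_decomp (v : Fin n → F) : v = ∑ k, v k • (Pi.single k 1 : Fin n → F) := by
  ext j
  rw [Finset.sum_apply]
  rw [Finset.sum_eq_single j]
  · simp
  · intro k _ hk
    simp [Pi.single_apply, hk.symm]
  · simp

lemma dot_of_dual (f : (Fin n → F) →ₗ[F] F) (v : Fin n → F) :
    dotF v (fun k => f (Pi.single k 1)) = f v := by
  rw [dotF_apply]
  conv_rhs => rw [single_decomp v]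
  rw [map_sum]
  simp [smul_eq_mul]

lemma exists_dot_one {v : Fin n → F} (hv : v ≠ 0) : ∃ x, dotF v x = 1 := by
  obtain ⟨k, hk⟩ := Function.ne_iff.mp hv
  have hk' : v k ≠ 0 := by simpa using hk
  refine ⟨(v k)⁻¹ • (Pi.single k 1 : Fin n → F), ?_⟩
  rw [dotF_apply]
  rw [Finset.sum_eq_single k]
  · simp [hk']
  · intro j _ hj
    simp [Pi.single_apply, hj]
  · simp

lemma exists_dot_one_zero {v w : Fin n → F}
    (h : LinearIndependent F ![v, w]) : ∃ x, dotF v x = 1 ∧ dotF w x = 0 := by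
  classical
  have hvw : v ≠ w := by
    intro hvw
    have := h.injective (show ![v, w] 0 = ![v, w] 1 by simpa using hvw)
    simp at this
  have hs : LinearIndepOn F id (Set.range ![v, w]) :=
    (linearIndepOn_id_range_iff (LinearIndependent.injective h)).mpr h
  let b := Module.Basis.extend hs
  have hvmem : v ∈ hs.extend (Set.subset_univ _) := by
    apply hs.subset_extend
    exact ⟨0, rfl⟩
  have hwmem : w ∈ hs.extend (Set.subset_univ _) := by
    apply hs.subset_extend
    exact ⟨1, rfl⟩
  have key : ∀ i j : hs.extend (Set.subset_univ _),
      b.coord i (j : Fin n → F) = if j = i then 1 else 0 := by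
    intro i j
    rw [← Module.Basis.extend_apply_self hs j, Module.Basis.coord_apply, Module.Basis.repr_self,
      Finsupp.single_apply]
  have hfv : b.coord ⟨v, hvmem⟩ v = 1 := by
    have := key ⟨v, hvmem⟩ ⟨v, hvmem⟩
    simpa using this
  have hfw : b.coord ⟨v, hvmem⟩ w = 0 := by
    have := key ⟨v, hvmem⟩ ⟨w, hwmem⟩
    simpa [Subtype.ext_iff, hvw.symm] using this
  refine ⟨fun k => b.coord ⟨v, hvmem⟩ (Pi.single k 1), ?_, ?_⟩
  · rw [dot_of_dual, hfv]
  · rw [dot_of_dual, hfw]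

lemma rep_pair_indep {p q : ℙ F (Fin n → F)} (hpq : p ≠ q) :
    LinearIndependent F ![p.rep, q.rep] := by
  rw [LinearIndependent.pair_iff' p.rep_nonzero]
  intro a ha
  have ha0 : a ≠ 0 := by
    intro h0
    exact q.rep_nonzero (by simpa [h0] using ha.symm)
  apply hpq
  have : Projectivization.mk F q.rep q.rep_nonzero
      = Projectivization.mk F p.rep p.rep_nonzero := by
    rw [Projectivization.mk_eq_mk_iff]
    exact ⟨Units.mk0 a ha0, ha⟩
  rw [Projectivization.mk_rep, Projectivization.mk_rep] at this
  exact this.symm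

noncomputable def projEquiv : Fˣ × ℙ F (Fin n → F) ≃ {v : Fin n → F // v ≠ 0} := by
  refine Equiv.ofBijective
    (fun cp => ⟨(cp.1 : F) • cp.2.rep, smul_ne_zero cp.1.ne_zero cp.2.rep_nonzero⟩) ⟨?_, ?_⟩
  · rintro ⟨c, p⟩ ⟨d, q⟩ h
    simp only [Subtype.mk.injEq] at h
    have hpq : p = q := by
      have h1 : Projectivization.mk F ((c : F) • p.rep)
          (smul_ne_zero c.ne_zero p.rep_nonzero) = Projectivization.mk F p.rep p.rep_nonzero := by
        rw [Projectivization.mk_eq_mk_iff]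
        exact ⟨c, rfl⟩
      have h2 : Projectivization.mk F ((d : F) • q.rep)
          (smul_ne_zero d.ne_zero q.rep_nonzero) = Projectivization.mk F q.rep q.rep_nonzero := by
        rw [Projectivization.mk_eq_mk_iff]
        exact ⟨d, rfl⟩
      rw [Projectivization.mk_rep] at h1 h2
      rw [← h1, ← h2]
      simp only [h]
    subst hpq
    have hcd : (c : F) = d :=
      smul_left_injective F p.rep_nonzero (h : (c : F) • p.rep = (d : F) • p.rep)
    exact Prod.ext (Units.ext hcd) rfl
  · rintro ⟨v, hv⟩
    obtain ⟨a, ha⟩ := Projectivization.exists_smul_eq_mk_rep F v hv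
    refine ⟨⟨a⁻¹, Projectivization.mk F v hv⟩, ?_⟩
    ext : 1
    have := congrArg (fun x => (a⁻¹ : Fˣ) • x) ha
    simpa [smul_smul, Units.smul_def] using this.symm

end Aux

/-- Hegedűs' construction (Theorem 1.5): for any prime power `q` and `n ≥ 1` there is a
cross-intersecting pair of families of affine subspaces of `F_q^n` of size
`m = (qⁿ − 1)/(q − 1)`. -/
theorem exists_affine_cross_intersecting_of_size
    {F : Type*} [Field F] [Fintype F] (q n : ℕ)
    (hq : q = Fintype.card F) (hn : 1 ≤ n) :
    ∃ (m : ℕ) (A B : Fin m → Set (Fin n → F)),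
      m = (q ^ n - 1) / (q - 1) ∧
      (∀ i, ∃ (v : Fin n → F) (V : Submodule F (Fin n → F)),
        A i = v +ᵥ (V : Set (Fin n → F))) ∧
      (∀ i, ∃ (u : Fin n → F) (U : Submodule F (Fin n → F)),
        B i = u +ᵥ (U : Set (Fin n → F))) ∧
      (∀ i, A i ∩ B i = ∅) ∧
      (∀ i j, i < j → (A i ∩ B j).Nonempty) := by
  classical
  haveI : Finite (ℙ F (Fin n → F)) := Quotient.finite _
  haveI : Fintype (ℙ F (Fin n → F)) := Fintype.ofFinite _
  set m := Fintype.card (ℙ F (Fin n → F)) with hmdef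
  have hcard : (q - 1) * m = q ^ n - 1 := by
    have h1 : Fintype.card (Fˣ × ℙ F (Fin n → F)) = Fintype.card {v : Fin n → F // v ≠ 0} :=
      Fintype.card_congr projEquiv
    rw [Fintype.card_prod, Fintype.card_units] at h1
    have h2 : Fintype.card {v : Fin n → F // v ≠ 0} = Fintype.card (Fin n → F) - 1 := by
      rw [Fintype.card_subtype_compl]
      simp
    rw [h2, Fintype.card_fun] at h1
    simpa [hq, Fintype.card_fin] using h1
  have hq2 : 2 ≤ q := by rw [hq]; exact Fintype.one_lt_card
  have hm : m = (q ^ n - 1) / (q - 1) := by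
    rw [← hcard, Nat.mul_div_cancel_left _ (by omega)]
  set e := (Fintype.equivFin (ℙ F (Fin n → F))).symm with he
  refine ⟨m, fun i => {x | dotF (e i).rep x = 1}, fun i => {x | dotF (e i).rep x = 0},
    hm, ?_, ?_, ?_, ?_⟩
  · intro i
    obtain ⟨x₀, hx₀⟩ := exists_dot_one (e i).rep_nonzero
    refine ⟨x₀, LinearMap.ker (dotF (e i).rep), ?_⟩
    ext x
    simp only [Set.mem_setOf_eq, Set.mem_vadd_set_iff_neg_vadd_mem, SetLike.mem_coe,
      LinearMap.mem_ker, vadd_eq_add]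
    rw [map_add, map_neg, hx₀]
    constructor <;> intro h <;> linear_combination h
  · intro i
    refine ⟨0, LinearMap.ker (dotF (e i).rep), ?_⟩
    ext x
    simp [Set.mem_vadd_set_iff_neg_vadd_mem]
  · intro i
    ext x
    simp only [Set.mem_inter_iff, Set.mem_setOf_eq, Set.mem_empty_iff_false, iff_false]
    rintro ⟨h1, h0⟩
    rw [h1] at h0
    exact one_ne_zero h0
  · intro i j hij
    have hne : e i ≠ e j := fun h => absurd (e.injective h) (by omega)
    obtain ⟨x, hx1, hx0⟩ := exists_dot_one_zero (rep_pair_indep hne)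
    exact ⟨x, hx1, hx0⟩
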